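/- arXiv:2510.23150 — 2 statements merged into one kernel-verified Lean document; each statement's English description precedes it below -/
import Mathlib

section
/- Let R(ρ,δ) = [[1,ρ,δ],[ρ,1,ρ],[δ,ρ,1]] with δ ∈ [0,1), ρ ∈ (0,1), and ρ ≥ (1+δ)/2. Then over the simplex {w ∈ ℝ³ : wᵢ ≥ 0, w₁+w₂+w₃ = 1}, the vector w* = (1/2, 0, 1/2) minimizes w^T R(ρ,δ) w among all symmetric allocations (w₁ = w₃), with minimum value (1+δ)/2. -/
open Matrix

/-- Barbell allocation: for `δ ∈ [0,1)`, `ρ ∈ (0,1)` with `ρ ≥ (1+δ)/2`, the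
vector `w* = (1/2, 0, 1/2)` lies in the simplex and minimizes `wᵀ R(ρ,δ) w`
among all symmetric allocations `(w, 1−2w, w)` with `w ∈ [0, 1/2]`, with
minimum value `(1+δ)/2`. -/
theorem barbell_min_symmetric (ρ δ : ℝ) (hδ0 : 0 ≤ δ) (hδ1 : δ < 1)
    (hρ0 : 0 < ρ) (hρ1 : ρ < 1) (hρ : (1 + δ) / 2 ≤ ρ) :
    let R : Matrix (Fin 3) (Fin 3) ℝ := !![1, ρ, δ; ρ, 1, ρ; δ, ρ, 1]
    let wstar : Fin 3 → ℝ := ![1 / 2, 0, 1 / 2]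
    (∀ i, 0 ≤ wstar i) ∧ (wstar 0 + wstar 1 + wstar 2 = 1) ∧
    wstar ⬝ᵥ (R *ᵥ wstar) = (1 + δ) / 2 ∧
    (∀ w : ℝ, 0 ≤ w → w ≤ 1 / 2 →
      wstar ⬝ᵥ (R *ᵥ wstar) ≤
        (![w, 1 - 2 * w, w] : Fin 3 → ℝ) ⬝ᵥ (R *ᵥ ![w, 1 - 2 * w, w])) := by
  refine ⟨?_, by norm_num [Matrix.cons_val_two], ?_, ?_⟩
  · intro i; fin_cases i <;> norm_num
  · simp [dotProduct, mulVec, Fin.sum_univ_three]; ring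
  · intro w hw0 hw1
    simp only [dotProduct, mulVec, Fin.sum_univ_three, Matrix.cons_val_zero,
      Matrix.cons_val_one, Matrix.head_cons, Matrix.cons_val_two, Matrix.tail_cons,
      Matrix.of_apply, Matrix.cons_val']
    nlinarith [sq_nonneg (1 - 2*w), mul_nonneg hw0 (sub_nonneg.2 hw1), sq_nonneg w, mul_nonneg hδ0 (sq_nonneg (1-2*w))]
end

section
/- Let R(ρ,δ) = [[1,ρ,δ],[ρ,1,ρ],[δ,ρ,1]] be positive definite with δ ∈ [0,1), ρ ∈ (0,1), and ρ ≥ (1+δ)/2. Then for every w in the full simplex {w ∈ ℝ³ : wᵢ ≥ 0, Σwᵢ = 1}, w^T R(ρ,δ) w ≥ (1+δ)/2, with equality iff w = (1/2, 0, 1/2). -/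
open Matrix

/-- Full-simplex barbell theorem: for `R(ρ,δ)` positive definite with
`δ ∈ [0,1)`, `ρ ∈ (0,1)` and `ρ ≥ (1+δ)/2`, every `w` in the simplex satisfies
`wᵀ R w ≥ (1+δ)/2`, with equality iff `w = (1/2, 0, 1/2)`. -/
theorem barbell_full_simplex (ρ δ : ℝ) (hδ0 : 0 ≤ δ) (hδ1 : δ < 1)
    (hρ0 : 0 < ρ) (hρ1 : ρ < 1) (hρ : (1 + δ) / 2 ≤ ρ)
    (hPD : (!![1, ρ, δ; ρ, 1, ρ; δ, ρ, 1] : Matrix (Fin 3) (Fin 3) ℝ).PosDef) :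
    let R : Matrix (Fin 3) (Fin 3) ℝ := !![1, ρ, δ; ρ, 1, ρ; δ, ρ, 1]
    ∀ w : Fin 3 → ℝ, (∀ i, 0 ≤ w i) → w 0 + w 1 + w 2 = 1 →
      ((1 + δ) / 2 ≤ w ⬝ᵥ (R *ᵥ w) ∧
        (w ⬝ᵥ (R *ᵥ w) = (1 + δ) / 2 ↔ w = ![1 / 2, 0, 1 / 2])) := by
  intro R w hw hsum
  have ha := hw 0
  have hb := hw 1
  have hc := hw 2
  have hQ : w ⬝ᵥ (R *ᵥ w)
      = w 0 * w 0 + w 1 * w 1 + w 2 * w 2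
        + 2 * ρ * (w 0 * w 1 + w 1 * w 2) + 2 * δ * (w 0 * w 2) := by
    simp [R, mulVec, dotProduct, Fin.sum_univ_three]
    ring
  have hc2 : w 2 = 1 - w 0 - w 1 := by linarith
  -- key identity
  have key : w ⬝ᵥ (R *ᵥ w) - (1 + δ) / 2
      = w 1 * ((w 0 + w 2) * (2 * ρ - 1 - δ) + w 1 * (1 - δ) / 2)
        + (1 - δ) / 2 * (w 0 - w 2) ^ 2 := by
    rw [hQ, hc2]; ring
  have hs : 0 ≤ 2 * ρ - 1 - δ := by linarith
  have hterm1 : 0 ≤ w 1 * ((w 0 + w 2) * (2 * ρ - 1 - δ) + w 1 * (1 - δ) / 2) := by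
    apply mul_nonneg hb
    have := mul_nonneg (by linarith : (0:ℝ) ≤ w 0 + w 2) hs
    nlinarith
  have hterm2 : 0 ≤ (1 - δ) / 2 * (w 0 - w 2) ^ 2 :=
    mul_nonneg (by linarith) (sq_nonneg _)
  refine ⟨by linarith, ?_, ?_⟩
  · intro heq
    have h0 : w 1 * ((w 0 + w 2) * (2 * ρ - 1 - δ) + w 1 * (1 - δ) / 2)
        + (1 - δ) / 2 * (w 0 - w 2) ^ 2 = 0 := by linarith
    have ht1 : w 1 * ((w 0 + w 2) * (2 * ρ - 1 - δ) + w 1 * (1 - δ) / 2) = 0 := by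
      linarith
    have ht2 : (1 - δ) / 2 * (w 0 - w 2) ^ 2 = 0 := by linarith
    have hsq : (w 0 - w 2) ^ 2 = 0 := by
      rcases mul_eq_zero.mp ht2 with h | h
      · exfalso; linarith
      · exact h
    have hac : w 0 = w 2 := by
      have := pow_eq_zero_iff (n := 2) (by norm_num) |>.mp hsq
      linarith
    have hb0 : w 1 = 0 := by
      by_contra hbne
      have hbpos : 0 < w 1 := lt_of_le_of_ne hb (Ne.symm hbne)
      have : 0 < w 1 * ((w 0 + w 2) * (2 * ρ - 1 - δ) + w 1 * (1 - δ) / 2) := by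
        apply mul_pos hbpos
        have h1 := mul_nonneg (by linarith : (0:ℝ) ≤ w 0 + w 2) hs
        nlinarith
      linarith
    have haval : w 0 = 1 / 2 := by linarith
    have hcval : w 2 = 1 / 2 := by linarith
    funext i
    fin_cases i
    · simpa using haval
    · simpa using hb0
    · simpa using hcval
  · intro hweq
    have haval : w 0 = 1 / 2 := by rw [hweq]; norm_num
    have hbval : w 1 = 0 := by rw [hweq]; norm_num
    have hcval : w 2 = 1 / 2 := by rw [hweq]; rfl
    rw [hQ, haval, hbval, hcval]; ring
end
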